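/- Let Q : ℝ → M₂(ℂ) be measurable with ∫_ℝ ‖Q(x)‖ dx < ∞, set U(x) = [[0, Q(x)],[−Q(x)†, 0]] ∈ M₄(ℂ), σ = diag(1,1,−1,−1), and fix λ ∈ ℝ. Then there exists a unique bounded continuous function μ : ℝ → M₄(ℂ) satisfying the Volterra integral equation μ(x) = I₄ + ∫_{−∞}^{x} e^{iλ(x'−x)σ}·U(x')·μ(x')·e^{−iλ(x'−x)σ} dx' for all x ∈ ℝ. -/

import Mathlib

open scoped Matrix

/-- The potential matrix `U = [[0, Q],[−Q†, 0]]`. -/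
noncomputable def Umat (Q : ℝ → Matrix (Fin 2) (Fin 2) ℂ) :
    ℝ → Matrix (Fin 2 ⊕ Fin 2) (Fin 2 ⊕ Fin 2) ℂ :=
  fun x => Matrix.fromBlocks 0 (Q x) (-(Q x)ᴴ) 0

/-- The matrix exponential `e^{sσ} = diag(e^s, e^s, e^{−s}, e^{−s})` for
`σ = diag(1,1,−1,−1)`. -/
noncomputable def expSig (s : ℂ) : Matrix (Fin 2 ⊕ Fin 2) (Fin 2 ⊕ Fin 2) ℂ :=
  Matrix.fromBlocks (Complex.exp s • 1) 0 0 (Complex.exp (-s) • 1)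

noncomputable section
namespace VolterraAux

open MeasureTheory Complex Filter
open scoped ENNReal NNReal

abbrev Idx : Type := Fin 2 ⊕ Fin 2
abbrev V : Type := Idx → Idx → ℂ

def vmul (M N : V) : V := fun a b => ∑ j, M a j * N j b

lemma norm_le_of_entries {M : V} {r : ℝ} (hr : 0 ≤ r) (h : ∀ a b, ‖M a b‖ ≤ r) : ‖M‖ ≤ r :=
  (pi_norm_le_iff_of_nonneg hr).2 fun a => (pi_norm_le_iff_of_nonneg hr).2 (h a)

lemma entry_le_norm (M : V) (a b : Idx) : ‖M a b‖ ≤ ‖M‖ :=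
  (norm_le_pi_norm (M a) b).trans (norm_le_pi_norm M a)

lemma card_idx : (Fintype.card Idx : ℝ) = 4 := by simp

lemma norm_vmul_le (M N : V) : ‖vmul M N‖ ≤ 4 * ‖M‖ * ‖N‖ := by
  have h0 : (0:ℝ) ≤ 4 * ‖M‖ * ‖N‖ := by positivity
  refine norm_le_of_entries h0 fun a b => ?_
  calc ‖∑ j, M a j * N j b‖ ≤ ∑ j, ‖M a j * N j b‖ := norm_sum_le _ _
    _ ≤ ∑ _j : Idx, ‖M‖ * ‖N‖ := by
        refine Finset.sum_le_sum fun j _ => ?_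
        rw [norm_mul]
        exact mul_le_mul (entry_le_norm M a j) (entry_le_norm N j b) (norm_nonneg _) (norm_nonneg _)
    _ = 4 * ‖M‖ * ‖N‖ := by
        rw [Finset.sum_const, Finset.card_univ]
        rw [nsmul_eq_mul, card_idx]; ring

def eSig (s : ℂ) : V := fun a b => expSig s a b

lemma eSig_apply (s : ℂ) (a b : Idx) : eSig s a b =
    (if a = b then (match a with | .inl _ => Complex.exp s | .inr _ => Complex.exp (-s)) else 0) := by
  rcases a with a | a <;> rcases b with b | b <;>
    simp [eSig, expSig, Matrix.one_apply, Matrix.smul_apply, Sum.inl.injEq, Sum.inr.injEq] <;>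
    split <;> simp_all

lemma norm_eSig_le {s : ℂ} (h : s.re = 0) : ‖eSig s‖ ≤ 1 := by
  refine norm_le_of_entries zero_le_one fun a b => ?_
  rw [eSig_apply]
  split
  · rcases a with a | a <;> simp [Complex.norm_exp, h]
  · simp

lemma continuous_eSig : Continuous eSig := by
  refine continuous_pi fun a => continuous_pi fun b => ?_
  simp only [eSig_apply]
  split
  · rcases a with a | a
    · exact Complex.continuous_exp
    · exact Complex.continuous_exp.comp continuous_neg
  · exact continuous_const


variable {Q : ℝ → Matrix (Fin 2) (Fin 2) ℂ}

def uMat (Q : ℝ → Matrix (Fin 2) (Fin 2) ℂ) (t : ℝ) : V := fun a b => Umat Q t a b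

lemma measurable_uMat_entry (hmeas : ∀ a b, Measurable fun x => Q x a b) (a b : Idx) :
    Measurable fun t => uMat Q t a b := by
  rcases a with a | a <;> rcases b with b | b <;>
    simp only [uMat, Umat, Matrix.fromBlocks_apply₁₁, Matrix.fromBlocks_apply₁₂,
      Matrix.fromBlocks_apply₂₁, Matrix.fromBlocks_apply₂₂, Matrix.zero_apply, Matrix.neg_apply,
      Matrix.conjTranspose_apply]
  · exact measurable_const
  · exact hmeas a b
  · exact (Complex.continuous_conj.measurable.comp (hmeas b a)).neg
  · exact measurable_const

lemma measurable_uMat (hmeas : ∀ a b, Measurable fun x => Q x a b) :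
    Measurable (uMat Q) :=
  measurable_pi_lambda _ fun a => measurable_pi_lambda _ fun b => measurable_uMat_entry hmeas a b

lemma integrable_uMat_entry (hint : ∀ a b, Integrable fun x => Q x a b) (a b : Idx) :
    Integrable fun t => ‖uMat Q t a b‖ := by
  rcases a with a | a <;> rcases b with b | b <;>
    simp only [uMat, Umat, Matrix.fromBlocks_apply₁₁, Matrix.fromBlocks_apply₁₂,
      Matrix.fromBlocks_apply₂₁, Matrix.fromBlocks_apply₂₂, Matrix.zero_apply, Matrix.neg_apply,
      Matrix.conjTranspose_apply, norm_neg, RCLike.norm_conj, norm_star]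
  · simpa using (integrable_zero ℝ ℝ (MeasureTheory.volume)).congr (by simp)
  · exact (hint a b).norm
  · exact (hint b a).norm
  · simpa using (integrable_zero ℝ ℝ (MeasureTheory.volume)).congr (by simp)

/-- scalar bound function -/
def fA (Q : ℝ → Matrix (Fin 2) (Fin 2) ℂ) (t : ℝ) : ℝ := ∑ a : Idx, ∑ b : Idx, ‖uMat Q t a b‖

lemma fA_nonneg (t : ℝ) : 0 ≤ fA Q t :=
  Finset.sum_nonneg fun a _ => Finset.sum_nonneg fun b _ => norm_nonneg _

lemma norm_uMat_le (t : ℝ) : ‖uMat Q t‖ ≤ fA Q t := by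
  have : ∀ a b : Idx, ‖uMat Q t a b‖ ≤ fA Q t := by
    intro a b
    calc ‖uMat Q t a b‖ ≤ ∑ b' : Idx, ‖uMat Q t a b'‖ :=
          Finset.single_le_sum (fun b' _ => norm_nonneg _) (Finset.mem_univ b)
      _ ≤ fA Q t := Finset.single_le_sum (f := fun a' => ∑ b' : Idx, ‖uMat Q t a' b'‖)
          (fun a' _ => Finset.sum_nonneg fun b' _ => norm_nonneg _) (Finset.mem_univ a)
  exact (pi_norm_le_iff_of_nonneg (fA_nonneg t)).2 fun a =>
    (pi_norm_le_iff_of_nonneg (fA_nonneg t)).2 (this a)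

lemma integrable_fA (hint : ∀ a b, Integrable fun x => Q x a b) : Integrable (fA Q) := by
  refine integrable_finset_sum _ fun a _ => integrable_finset_sum _ fun b _ => ?_
  exact integrable_uMat_entry hint a b

lemma measurable_fA (hmeas : ∀ a b, Measurable fun x => Q x a b) : Measurable (fA Q) := by
  refine Finset.measurable_sum _ fun a _ => Finset.measurable_sum _ fun b _ => ?_
  exact (measurable_uMat_entry hmeas a b).norm





/-- weight `w s t = 1` if `s ≤ t`, else `0`. -/
def w (s t : ℝ) : ℝ≥0∞ := if s ≤ t then 1 else 0

lemma w_meas_pair : Measurable (fun p : ℝ × ℝ => w p.1 p.2) :=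
  Measurable.ite (measurableSet_le measurable_fst measurable_snd) measurable_const measurable_const

lemma w_meas_fst (t : ℝ) : Measurable fun s => w s t :=
  w_meas_pair.comp (measurable_id.prodMk measurable_const)

lemma w_meas_snd (s : ℝ) : Measurable fun t => w s t :=
  w_meas_pair.comp (measurable_const.prodMk measurable_id)

lemma w_mono (s : ℝ) : Monotone fun t => w s t := by
  intro t t' h
  simp only [w]
  split_ifs with h1 h2
  · exact le_refl _
  · exact absurd (h1.trans h) h2
  · exact zero_le
  · exact le_refl _

lemma lint_w (f : ℝ → ℝ≥0∞) (x : ℝ) : ∫⁻ t, w t x * f t = ∫⁻ t in Set.Iic x, f t := by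
  rw [← lintegral_indicator measurableSet_Iic]
  refine lintegral_congr fun t => ?_
  by_cases h : t ≤ x <;> simp [w, h, Set.indicator_apply, Set.mem_Iic]

variable {φ g : ℝ → ℝ≥0∞}

/-- the running integral `Hf t = ∫_{-∞}^t φ`. -/
def Hf (φ : ℝ → ℝ≥0∞) (t : ℝ) : ℝ≥0∞ := ∫⁻ s, w s t * φ s

lemma Hf_mono : Monotone (Hf φ) := fun t t' h =>
  lintegral_mono fun s => mul_le_mul_left (w_mono s h) _

lemma Hf_meas : Measurable (Hf φ) := Hf_mono.measurable

lemma meas_inner (hφ : Measurable φ) (hg : Measurable g) :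
    Measurable fun t => ∫⁻ s, w s t * (φ s * g s) := (Hf_mono (φ := fun s => φ s * g s)).measurable

lemma key_identity (hφ : Measurable φ) (hg : Measurable g) (x : ℝ) :
    (∫⁻ t, w t x * (φ t * g t * Hf φ t))
      + (∫⁻ t, w t x * (φ t * ∫⁻ s, w s t * (φ s * g s)))
    = Hf φ x * ∫⁻ t, w t x * (φ t * g t) := by
  classical
  set W : ℝ → ℝ → ℝ≥0∞ := fun s t => φ s * φ t * (g s + g t) with hW
  have hWmeas : Measurable fun p : ℝ × ℝ => W p.1 p.2 :=
    ((hφ.comp measurable_fst).mul (hφ.comp measurable_snd)).mul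
      ((hg.comp measurable_fst).add (hg.comp measurable_snd))
  have hWs : ∀ t, Measurable fun s => W s t := fun t =>
    hWmeas.comp (measurable_id.prodMk measurable_const)
  -- T1 : region s ≤ t ≤ x
  set T1 : ℝ≥0∞ := ∫⁻ t, ∫⁻ s, w t x * w s t * W s t with hT1
  -- T2 : region t ≤ s ≤ x
  set T2 : ℝ≥0∞ := ∫⁻ t, ∫⁻ s, w s x * w t s * W s t with hT2
  -- Step 1 : LHS = T1
  have step1 : (∫⁻ t, w t x * (φ t * g t * Hf φ t))
      + (∫⁻ t, w t x * (φ t * ∫⁻ s, w s t * (φ s * g s))) = T1 := by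
    have m1 : Measurable fun t => w t x * (φ t * g t * Hf φ t) :=
      ((w_meas_fst x).mul ((hφ.mul hg).mul Hf_meas))
    rw [← lintegral_add_left m1, hT1]
    refine lintegral_congr fun t => ?_
    have e1 : w t x * (φ t * g t * Hf φ t) = ∫⁻ s, w t x * (φ t * g t) * (w s t * φ s) := by
      rw [lintegral_const_mul (f := fun s => w s t * φ s) _ ((w_meas_fst t).mul hφ)]
      unfold Hf; ring
    have e2 : w t x * (φ t * ∫⁻ s, w s t * (φ s * g s))
        = ∫⁻ s, w t x * φ t * (w s t * (φ s * g s)) := by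
      rw [lintegral_const_mul (f := fun s => w s t * (φ s * g s)) _ ((w_meas_fst t).mul (hφ.mul hg))]
      ring
    rw [e1, e2, ← lintegral_add_left]
    · exact lintegral_congr fun s => by rw [hW]; ring
    · exact measurable_const.mul ((w_meas_fst t).mul hφ)
  -- Step 2 : T2 = T1 (swap + symmetry)
  have step2 : T2 = T1 := by
    have hswap : AEMeasurable (Function.uncurry fun t s => w s x * w t s * W s t)
        ((volume : Measure ℝ).prod volume) := by
      refine Measurable.aemeasurable ?_
      have : (Function.uncurry fun t s => w s x * w t s * W s t)
          = fun p : ℝ × ℝ => (w p.2 x * w p.1 p.2) * W p.2 p.1 := rfl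
      rw [this]
      exact (((w_meas_fst x).comp measurable_snd).mul w_meas_pair).mul
        (hWmeas.comp (measurable_snd.prodMk measurable_fst))
    rw [hT2, lintegral_lintegral_swap hswap, hT1]
    exact lintegral_congr fun t => lintegral_congr fun s => by rw [hW]; ring
  -- Step 3 : T1 + T2 = square
  have step3 : T1 + T2 = ∫⁻ t, ∫⁻ s, w t x * w s x * W s t := by
    have m1 : ∀ t, Measurable fun s => w t x * w s t * W s t := fun t =>
      (measurable_const.mul (w_meas_fst t)).mul (hWs t)
    have hT1meas : Measurable fun t : ℝ => ∫⁻ s, w t x * w s t * W s t := by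
      have hunc : Measurable (Function.uncurry fun t s : ℝ => w t x * w s t * W s t) := by
        have : (Function.uncurry fun t s : ℝ => w t x * w s t * W s t)
            = fun p : ℝ × ℝ => w p.1 x * w p.2 p.1 * W p.2 p.1 := rfl
        rw [this]
        exact (((w_meas_fst x).comp measurable_fst).mul
          (w_meas_pair.comp (measurable_snd.prodMk measurable_fst))).mul
          (hWmeas.comp (measurable_snd.prodMk measurable_fst))
      exact hunc.lintegral_prod_right
    rw [hT1, hT2, ← lintegral_add_left hT1meas]
    refine lintegral_congr fun t => ?_
    rw [← lintegral_add_left (m1 t)]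
    have hae : ∀ᵐ s : ℝ, s ≠ t := by
      rw [MeasureTheory.ae_iff]
      simpa only [ne_eq, not_not, Set.setOf_eq_eq_singleton] using measure_singleton t
    refine lintegral_congr_ae (hae.mono fun s hs => ?_)
    have hw : w t x * w s t + w s x * w t s = w t x * w s x := by
      rcases lt_trichotomy s t with h | h | h
      · have h1 : s ≤ t := h.le
        have h2 : ¬ t ≤ s := not_le.2 h
        by_cases h3 : t ≤ x
        · have h4 : s ≤ x := h1.trans h3
          simp [w, h1, h2, h3, h4]
        · simp [w, h1, h2, h3]
      · exact absurd h hs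
      · have h1 : t ≤ s := h.le
        have h2 : ¬ s ≤ t := not_le.2 h
        by_cases h3 : s ≤ x
        · have h4 : t ≤ x := h1.trans h3
          simp [w, h1, h2, h3, h4]
        · simp [w, h1, h2, h3]
    calc w t x * w s t * W s t + w s x * w t s * W s t
        = (w t x * w s t + w s x * w t s) * W s t := by ring
      _ = w t x * w s x * W s t := by rw [hw]
  -- Step 4 : square = 2 * (Hf x * M)
  have step4 : (∫⁻ t, ∫⁻ s, w t x * w s x * W s t)
      = 2 * (Hf φ x * ∫⁻ t, w t x * (φ t * g t)) := by
    have inner : ∀ t, (∫⁻ s, w t x * w s x * W s t)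
        = w t x * φ t * (∫⁻ s, w s x * (φ s * g s)) + w t x * (φ t * g t) * Hf φ x := by
      intro t
      have : ∀ s, w t x * w s x * W s t
          = w t x * φ t * (w s x * (φ s * g s)) + w t x * (φ t * g t) * (w s x * φ s) := by
        intro s; rw [hW]; ring
      rw [lintegral_congr this, lintegral_add_left (f := fun s => w t x * φ t * (w s x * (φ s * g s)))
        (measurable_const.mul ((w_meas_fst x).mul (hφ.mul hg))),
        lintegral_const_mul (f := fun s => w s x * (φ s * g s)) _ ((w_meas_fst x).mul (hφ.mul hg)),
        lintegral_const_mul (f := fun s => w s x * φ s) _ ((w_meas_fst x).mul hφ)]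
      rfl
    rw [lintegral_congr inner, lintegral_add_left]
    · rw [lintegral_mul_const (f := fun a => w a x * φ a) _ ((w_meas_fst x).mul hφ),
        lintegral_mul_const (f := fun a => w a x * (φ a * g a)) _ ((w_meas_fst x).mul (hφ.mul hg))]
      unfold Hf; ring
    · exact ((w_meas_fst x).mul hφ).mul measurable_const
  -- combine
  have h2 : 2 * T1 = 2 * (Hf φ x * ∫⁻ t, w t x * (φ t * g t)) := by
    rw [two_mul]
    nth_rewrite 2 [← step2]
    rw [step3, step4]
  rw [step1]
  exact (ENNReal.mul_right_inj (by norm_num) (by norm_num)).1 h2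


lemma key_pow (hφ : Measurable φ) :
    ∀ (n : ℕ) (x : ℝ), ((n : ℝ≥0∞) + 1) * (∫⁻ t, w t x * (φ t * Hf φ t ^ n))
      = Hf φ x ^ (n + 1) := by
  intro n
  induction n with
  | zero => intro x; simp [Hf]
  | succ n ih =>
    intro x
    have hg : Measurable fun t => Hf φ t ^ n := Hf_meas.pow_const n
    have hid := key_identity hφ hg x
    have hterm1 : (∫⁻ t, w t x * (φ t * Hf φ t ^ n * Hf φ t))
        = ∫⁻ t, w t x * (φ t * Hf φ t ^ (n + 1)) :=
      lintegral_congr fun t => by rw [pow_succ]; ring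
    rw [hterm1] at hid
    have hmul := congrArg (fun z => ((n : ℝ≥0∞) + 1) * z) hid
    simp only [mul_add] at hmul
    have hB : ((n : ℝ≥0∞) + 1) * (∫⁻ t, w t x * (φ t * ∫⁻ s, w s t * (φ s * Hf φ s ^ n)))
        = ∫⁻ t, w t x * (φ t * Hf φ t ^ (n + 1)) := by
      rw [← lintegral_const_mul (f := fun t => w t x * (φ t * ∫⁻ s, w s t * (φ s * Hf φ s ^ n))) _ ((w_meas_fst x).mul (hφ.mul (meas_inner hφ hg)))]
      refine lintegral_congr fun t => ?_
      rw [← ih t]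
      ring
    rw [hB] at hmul
    have hR : ((n : ℝ≥0∞) + 1) * (Hf φ x * ∫⁻ t, w t x * (φ t * Hf φ t ^ n))
        = Hf φ x ^ (n + 1 + 1) := by
      rw [← mul_assoc, mul_comm ((n : ℝ≥0∞) + 1) (Hf φ x), mul_assoc, ih x]
      rw [← pow_succ']
    rw [hR] at hmul
    have hcast : (((n + 1 : ℕ) : ℝ≥0∞) + 1) = ((n : ℝ≥0∞) + 1) + 1 := by push_cast; ring
    rw [hcast, add_mul, one_mul, hmul]

lemma key_pow_div (hφ : Measurable φ) (n : ℕ) (x : ℝ) :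
    (∫⁻ t, w t x * (φ t * Hf φ t ^ n)) ≤ Hf φ x ^ (n + 1) / ((n : ℝ≥0∞) + 1) := by
  have hb0 : ((n : ℝ≥0∞) + 1) ≠ 0 := by
    exact ne_of_gt (lt_of_lt_of_le zero_lt_one le_add_self)
  have hbt : ((n : ℝ≥0∞) + 1) ≠ ∞ := by
    exact ENNReal.add_ne_top.2 ⟨ENNReal.natCast_ne_top n, ENNReal.one_ne_top⟩
  rw [ENNReal.le_div_iff_mul_le (Or.inl hb0) (Or.inl hbt), mul_comm]
  exact le_of_eq (key_pow hφ n x)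

/-! ### Real version -/

def hleb (f : ℝ → ℝ) (x : ℝ) : ℝ := ∫ t in Set.Iic x, f t

variable {f : ℝ → ℝ}

lemma hleb_nonneg (h0 : ∀ t, 0 ≤ f t) (x : ℝ) : 0 ≤ hleb f x :=
  setIntegral_nonneg measurableSet_Iic fun t _ => h0 t

lemma hleb_mono (hi : Integrable f) (h0 : ∀ t, 0 ≤ f t) : Monotone (hleb f) := by
  intro a b hab
  refine setIntegral_mono_set hi.integrableOn (ae_of_all _ fun t => h0 t) ?_
  exact HasSubset.Subset.eventuallyLE (Set.Iic_subset_Iic.2 hab)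

lemma hleb_le (hi : Integrable f) (h0 : ∀ t, 0 ≤ f t) (x : ℝ) : hleb f x ≤ ∫ t, f t :=
  setIntegral_le_integral hi (ae_of_all _ fun t => h0 t)

lemma ofReal_hleb (hi : Integrable f) (h0 : ∀ t, 0 ≤ f t) (x : ℝ) :
    ENNReal.ofReal (hleb f x) = Hf (fun t => ENNReal.ofReal (f t)) x := by
  unfold hleb Hf
  rw [lint_w]
  exact MeasureTheory.ofReal_integral_eq_lintegral_ofReal hi.integrableOn
    (ae_of_all _ fun t => h0 t)

lemma real_key (hm : Measurable f) (hi : Integrable f) (h0 : ∀ t, 0 ≤ f t) (n : ℕ) (x : ℝ) :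
    ∫ t in Set.Iic x, f t * hleb f t ^ n ≤ hleb f x ^ (n + 1) / ((n : ℝ) + 1) := by
  set φ : ℝ → ℝ≥0∞ := fun t => ENNReal.ofReal (f t) with hφdef
  have hφ : Measurable φ := hm.ennreal_ofReal
  have hmono : Monotone (hleb f) := hleb_mono hi h0
  have hIntLHS : IntegrableOn (fun t => f t * hleb f t ^ n) (Set.Iic x) := by
    have hmeasg : AEStronglyMeasurable (fun t => hleb f t ^ n)
        (MeasureTheory.volume.restrict (Set.Iic x)) :=
      ((hmono.measurable).pow_const n).aestronglyMeasurable
    have hbd : ∀ t, ‖hleb f t ^ n‖ ≤ (∫ s, f s) ^ n := by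
      intro t
      rw [Real.norm_eq_abs, _root_.abs_of_nonneg (pow_nonneg (hleb_nonneg h0 t) n)]
      exact pow_le_pow_left₀ (hleb_nonneg h0 t) (hleb_le hi h0 t) n
    have h := Integrable.bdd_mul hi.integrableOn hmeasg (ae_of_all _ hbd)
    exact h.congr (ae_of_all _ fun t => mul_comm _ _)
  have hof : ENNReal.ofReal (∫ t in Set.Iic x, f t * hleb f t ^ n)
      = ∫⁻ t, w t x * (φ t * Hf φ t ^ n) := by
    rw [MeasureTheory.ofReal_integral_eq_lintegral_ofReal hIntLHS
      (ae_of_all _ fun t => mul_nonneg (h0 t) (pow_nonneg (hleb_nonneg h0 t) n)), ← lint_w]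
    refine lintegral_congr fun t => ?_
    congr 1
    rw [ENNReal.ofReal_mul (h0 t), ENNReal.ofReal_pow (hleb_nonneg h0 t), ofReal_hleb hi h0]
  have hkey : ENNReal.ofReal (∫ t in Set.Iic x, f t * hleb f t ^ n)
      ≤ ENNReal.ofReal (hleb f x ^ (n + 1) / ((n : ℝ) + 1)) := by
    rw [hof]
    refine le_trans (key_pow_div hφ n x) (le_of_eq ?_)
    rw [ENNReal.ofReal_div_of_pos (by positivity), ENNReal.ofReal_pow (hleb_nonneg h0 x),
      ofReal_hleb hi h0]
    congr 1
    rw [show ((n : ℝ) + 1) = ((n + 1 : ℕ) : ℝ) by push_cast; ring, ENNReal.ofReal_natCast]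
    push_cast
    ring
  refine (ENNReal.ofReal_le_ofReal_iff ?_).1 hkey
  exact div_nonneg (pow_nonneg (hleb_nonneg h0 x) _) (by positivity)




/-! ### The Volterra operator -/

def oneV : V := fun a b => (1 : Matrix Idx Idx ℂ) a b

lemma norm_oneV : ‖oneV‖ ≤ 1 := by
  refine norm_le_of_entries zero_le_one fun a b => ?_
  simp only [oneV, Matrix.one_apply]
  split <;> simp

def cc (lam x t : ℝ) : ℂ := Complex.I * (lam : ℂ) * ((t : ℂ) - (x : ℂ))

lemma cc_re (lam x t : ℝ) : (cc lam x t).re = 0 := by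
  simp [cc, Complex.mul_re, Complex.mul_im]

lemma norm_eSig_cc (lam x t : ℝ) : ‖eSig (cc lam x t)‖ ≤ 1 :=
  norm_eSig_le (cc_re lam x t)

lemma norm_eSig_neg_cc (lam x t : ℝ) : ‖eSig (-cc lam x t)‖ ≤ 1 :=
  norm_eSig_le (by rw [Complex.neg_re, cc_re, neg_zero])

lemma continuous_cc (lam : ℝ) : Continuous fun p : ℝ × ℝ => cc lam p.1 p.2 := by
  unfold cc
  fun_prop

lemma measurable_vmul {F G : ℝ → V} (hF : Measurable F) (hG : Measurable G) :
    Measurable fun t => vmul (F t) (G t) := by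
  refine measurable_pi_lambda _ fun a => measurable_pi_lambda _ fun b => ?_
  refine Finset.measurable_sum _ fun j _ => Measurable.mul ?_ ?_
  · exact (measurable_pi_apply j).comp ((measurable_pi_apply a).comp hF)
  · exact (measurable_pi_apply b).comp ((measurable_pi_apply j).comp hG)

lemma continuous_vmul {α : Type*} [TopologicalSpace α] {F G : α → V} (hF : Continuous F)
    (hG : Continuous G) : Continuous fun y => vmul (F y) (G y) := by
  refine continuous_pi fun a => continuous_pi fun b => ?_
  refine continuous_finset_sum _ fun j _ => Continuous.mul ?_ ?_
  · exact ((continuous_apply j).comp ((continuous_apply a).comp hF))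
  · exact ((continuous_apply b).comp ((continuous_apply j).comp hG))

lemma vmul_sub_left (M N P : V) : vmul (M - N) P = vmul M P - vmul N P := by
  funext a b
  simp [vmul, sub_mul, Finset.sum_sub_distrib]

lemma vmul_sub_right (M N P : V) : vmul M (N - P) = vmul M N - vmul M P := by
  funext a b
  simp [vmul, mul_sub, Finset.sum_sub_distrib]

/-- The integrand kernel. -/
def Gker (Q : ℝ → Matrix (Fin 2) (Fin 2) ℂ) (lam : ℝ) (μ : ℝ → V) (x t : ℝ) : V :=
  vmul (eSig (cc lam x t)) (vmul (uMat Q t) (vmul (μ t) (eSig (-cc lam x t))))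

/-- The scalar dominating function. -/
def gQ (Q : ℝ → Matrix (Fin 2) (Fin 2) ℂ) (t : ℝ) : ℝ := 64 * fA Q t

lemma gQ_nonneg (t : ℝ) : 0 ≤ gQ Q t := by
  have := fA_nonneg (Q := Q) t; unfold gQ; linarith

lemma integrable_gQ (hint : ∀ a b, Integrable fun x => Q x a b) : Integrable (gQ Q) :=
  (integrable_fA hint).const_mul 64

lemma measurable_gQ (hmeas : ∀ a b, Measurable fun x => Q x a b) : Measurable (gQ Q) :=
  (measurable_fA hmeas).const_mul 64

lemma norm_vmul_le3 {A B : V} (U M : V) (hA : ‖A‖ ≤ 1) (hB : ‖B‖ ≤ 1) :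
    ‖vmul A (vmul U (vmul M B))‖ ≤ 64 * ‖U‖ * ‖M‖ := by
  calc ‖vmul A (vmul U (vmul M B))‖ ≤ 4 * ‖A‖ * ‖vmul U (vmul M B)‖ := norm_vmul_le _ _
    _ ≤ 4 * 1 * ‖vmul U (vmul M B)‖ := by gcongr
    _ = 4 * ‖vmul U (vmul M B)‖ := by ring
    _ ≤ 4 * (4 * ‖U‖ * ‖vmul M B‖) := by gcongr; exact norm_vmul_le _ _
    _ ≤ 4 * (4 * ‖U‖ * (4 * ‖M‖ * ‖B‖)) := by
        gcongr
        exact norm_vmul_le _ _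
    _ ≤ 4 * (4 * ‖U‖ * (4 * ‖M‖ * 1)) := by gcongr
    _ = 64 * ‖U‖ * ‖M‖ := by ring

lemma norm_Gker_le (Q : ℝ → Matrix (Fin 2) (Fin 2) ℂ) (lam : ℝ) (μ : ℝ → V) (x t : ℝ) :
    ‖Gker Q lam μ x t‖ ≤ gQ Q t * ‖μ t‖ := by
  refine le_trans (norm_vmul_le3 _ _ (norm_eSig_cc lam x t) (norm_eSig_neg_cc lam x t)) ?_
  unfold gQ
  have h1 : ‖uMat Q t‖ ≤ fA Q t := norm_uMat_le t
  have h2 : (0:ℝ) ≤ ‖μ t‖ := norm_nonneg _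
  nlinarith [fA_nonneg (Q := Q) t, norm_nonneg (uMat Q t)]

lemma meas_Gker (hmeas : ∀ a b, Measurable fun x => Q x a b) {μ : ℝ → V} (hμ : Measurable μ)
    (lam x : ℝ) : Measurable fun t => Gker Q lam μ x t := by
  have h1 : Measurable fun t => eSig (cc lam x t) :=
    (continuous_eSig.comp ((continuous_cc lam).comp (Continuous.prodMk_right x))).measurable
  have h2 : Measurable fun t => eSig (-cc lam x t) := by
    have : Continuous fun t : ℝ => -cc lam x t :=
      (((continuous_cc lam).comp (Continuous.prodMk_right x))).neg
    exact (continuous_eSig.comp this).measurable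
  exact measurable_vmul h1 (measurable_vmul (measurable_uMat hmeas) (measurable_vmul hμ h2))

lemma cont_Gker_x (Q : ℝ → Matrix (Fin 2) (Fin 2) ℂ) (lam : ℝ) (μ : ℝ → V) (t : ℝ) :
    Continuous fun x => Gker Q lam μ x t := by
  have hc : Continuous fun x : ℝ => cc lam x t :=
    (continuous_cc lam).comp (continuous_id.prodMk continuous_const)
  exact continuous_vmul (continuous_eSig.comp hc)
    (continuous_vmul continuous_const (continuous_vmul continuous_const
      (continuous_eSig.comp hc.neg)))


/-! ### The operator on bounded continuous functions -/

variable {Q : ℝ → Matrix (Fin 2) (Fin 2) ℂ} {lam : ℝ}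

lemma integrableOn_Gker (hmeas : ∀ a b, Measurable fun x => Q x a b)
    (hint : ∀ a b, Integrable fun x => Q x a b) {μ : ℝ → V} (hμm : Measurable μ)
    {C : ℝ} (hC : ∀ t, ‖μ t‖ ≤ C) (x : ℝ) :
    IntegrableOn (fun t => Gker Q lam μ x t) (Set.Iic x) := by
  refine Integrable.mono' (g := fun t => gQ Q t * C) ?_ ?_ ?_
  · exact ((integrable_gQ hint).mul_const C).integrableOn
  · exact ((meas_Gker hmeas hμm lam x).aestronglyMeasurable).restrict
  · refine ae_of_all _ fun t => ?_
    exact (norm_Gker_le Q lam μ x t).trans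
      (mul_le_mul_of_nonneg_left (hC t) (gQ_nonneg t))

/-- The Volterra integral operator (unbundled). -/
def TT (Q : ℝ → Matrix (Fin 2) (Fin 2) ℂ) (lam : ℝ) (μ : ℝ → V) (x : ℝ) : V :=
  oneV + ∫ t in Set.Iic x, Gker Q lam μ x t

lemma norm_TT_le (hmeas : ∀ a b, Measurable fun x => Q x a b)
    (hint : ∀ a b, Integrable fun x => Q x a b) {μ : ℝ → V} (hμm : Measurable μ)
    {C : ℝ} (hC : ∀ t, ‖μ t‖ ≤ C) (x : ℝ) :
    ‖TT Q lam μ x‖ ≤ 1 + (∫ t, gQ Q t) * C := by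
  have hC0 : 0 ≤ C := (norm_nonneg _).trans (hC 0)
  refine (norm_add_le _ _).trans (add_le_add norm_oneV ?_)
  have h1 : ‖∫ t in Set.Iic x, Gker Q lam μ x t‖ ≤ ∫ t in Set.Iic x, gQ Q t * C := by
    refine norm_integral_le_of_norm_le ((integrable_gQ hint).mul_const C).integrableOn
      (ae_of_all _ fun t => ?_)
    exact (norm_Gker_le Q lam μ x t).trans (mul_le_mul_of_nonneg_left (hC t) (gQ_nonneg t))
  refine h1.trans ?_
  have h2 : ∫ t in Set.Iic x, gQ Q t * C ≤ ∫ t, gQ Q t * C :=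
    setIntegral_le_integral ((integrable_gQ hint).mul_const C)
      (ae_of_all _ fun t => mul_nonneg (gQ_nonneg t) hC0)
  refine h2.trans (le_of_eq ?_)
  rw [integral_mul_const]

lemma cont_TT (hmeas : ∀ a b, Measurable fun x => Q x a b)
    (hint : ∀ a b, Integrable fun x => Q x a b) {μ : ℝ → V} (hμm : Measurable μ)
    {C : ℝ} (hC : ∀ t, ‖μ t‖ ≤ C) :
    Continuous (TT Q lam μ) := by
  have key : Continuous fun x => ∫ t in Set.Iic x, Gker Q lam μ x t := by
    have hrw : ∀ x : ℝ, (∫ t in Set.Iic x, Gker Q lam μ x t)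
        = ∫ t, (Set.Iic x).indicator (fun t => Gker Q lam μ x t) t := fun x =>
      (integral_indicator measurableSet_Iic).symm
    rw [continuous_iff_continuousAt]
    intro x₀
    rw [show (fun x => ∫ t in Set.Iic x, Gker Q lam μ x t)
        = fun x => ∫ t, (Set.Iic x).indicator (fun t => Gker Q lam μ x t) t from funext hrw]
    refine continuousAt_of_dominated (bound := fun t => gQ Q t * C) ?_ ?_ ?_ ?_
    · refine Filter.Eventually.of_forall fun x => ?_
      exact ((meas_Gker hmeas hμm lam x).aestronglyMeasurable).indicator measurableSet_Iic
    · refine Filter.Eventually.of_forall fun x => ae_of_all _ fun t => ?_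
      refine (norm_indicator_le_norm_self _ _).trans ?_
      exact (norm_Gker_le Q lam μ x t).trans (mul_le_mul_of_nonneg_left (hC t) (gQ_nonneg t))
    · exact (integrable_gQ hint).mul_const C
    · have hae : ∀ᵐ t : ℝ, t ≠ x₀ := by
        rw [MeasureTheory.ae_iff]
        simpa only [ne_eq, not_not, Set.setOf_eq_eq_singleton] using measure_singleton x₀
      refine hae.mono fun t ht => ?_
      rcases lt_or_gt_of_ne ht with h | h
      · -- t < x₀ : near x₀, indicator is the function itself
        have hev : (fun x => (Set.Iic x).indicator (fun t => Gker Q lam μ x t) t)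
            =ᶠ[nhds x₀] fun x => Gker Q lam μ x t := by
          refine Filter.eventuallyEq_of_mem (isOpen_Ioi.mem_nhds h) fun x hx => ?_
          exact Set.indicator_of_mem (show t ∈ Set.Iic x from le_of_lt (Set.mem_Ioi.1 hx)) (fun t => Gker Q lam μ x t)
        exact ContinuousAt.congr ((cont_Gker_x Q lam μ t).continuousAt) hev.symm
      · have hev : (fun x => (Set.Iic x).indicator (fun t => Gker Q lam μ x t) t)
            =ᶠ[nhds x₀] fun _ => (0 : V) := by
          refine Filter.eventuallyEq_of_mem (isOpen_Iio.mem_nhds h) fun x hx => ?_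
          exact Set.indicator_of_notMem (show t ∉ Set.Iic x from not_le.2 (Set.mem_Iio.1 hx)) (fun t => Gker Q lam μ x t)
        exact ContinuousAt.congr continuousAt_const hev.symm
  exact continuous_const.add key

/-- The Volterra operator on bounded continuous functions. -/
noncomputable def Top (Q : ℝ → Matrix (Fin 2) (Fin 2) ℂ) (lam : ℝ)
    (hmeas : ∀ a b, Measurable fun x => Q x a b)
    (hint : ∀ a b, Integrable fun x => Q x a b) :
    BoundedContinuousFunction ℝ V → BoundedContinuousFunction ℝ V := fun μ =>
  BoundedContinuousFunction.ofNormedAddCommGroup (TT Q lam μ)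
    (cont_TT hmeas hint μ.continuous.measurable fun t => μ.norm_coe_le_norm t)
    (1 + (∫ t, gQ Q t) * ‖μ‖)
    (norm_TT_le hmeas hint μ.continuous.measurable fun t => μ.norm_coe_le_norm t)

lemma Top_apply (hmeas : ∀ a b, Measurable fun x => Q x a b)
    (hint : ∀ a b, Integrable fun x => Q x a b) (μ : BoundedContinuousFunction ℝ V) (x : ℝ) :
    Top Q lam hmeas hint μ x = oneV + ∫ t in Set.Iic x, Gker Q lam (⇑μ) x t := rfl


/-! ### The contraction estimate -/

lemma iterate_bound (hmeas : ∀ a b, Measurable fun x => Q x a b)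
    (hint : ∀ a b, Integrable fun x => Q x a b) :
    ∀ (n : ℕ) (μ ν : BoundedContinuousFunction ℝ V) (x : ℝ),
      ‖(Top Q lam hmeas hint)^[n] μ x - (Top Q lam hmeas hint)^[n] ν x‖
        ≤ dist μ ν * hleb (gQ Q) x ^ n / (Nat.factorial n) := by
  intro n
  induction n with
  | zero =>
    intro μ ν x
    simp only [Function.iterate_zero, id_eq, pow_zero, Nat.factorial_zero, Nat.cast_one,
      mul_one, div_one]
    rw [← dist_eq_norm]
    exact BoundedContinuousFunction.dist_coe_le_dist x
  | succ n ih =>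
    intro μ ν x
    rw [Function.iterate_succ_apply', Function.iterate_succ_apply']
    set a := (Top Q lam hmeas hint)^[n] μ with ha
    set b := (Top Q lam hmeas hint)^[n] ν with hb
    set δ : ℝ → V := fun t => a t - b t with hδ
    have hδm : Measurable δ := (a.continuous.sub b.continuous).measurable
    have hδb : ∀ t, ‖δ t‖ ≤ dist μ ν * hleb (gQ Q) t ^ n / (Nat.factorial n) := fun t => ih μ ν t
    have hInta := integrableOn_Gker (lam := lam) hmeas hint a.continuous.measurable
      (fun t => a.norm_coe_le_norm t) x
    have hIntb := integrableOn_Gker (lam := lam) hmeas hint b.continuous.measurable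
      (fun t => b.norm_coe_le_norm t) x
    have hsub : Top Q lam hmeas hint a x - Top Q lam hmeas hint b x
        = ∫ t in Set.Iic x, (Gker Q lam (⇑a) x t - Gker Q lam (⇑b) x t) := by
      rw [Top_apply, Top_apply, integral_sub hInta hIntb]
      abel
    have hdiff : ∀ t, Gker Q lam (⇑a) x t - Gker Q lam (⇑b) x t = Gker Q lam δ x t := by
      intro t
      unfold Gker
      rw [← vmul_sub_right, ← vmul_sub_right, ← vmul_sub_left]
    rw [hsub]
    have hd0 : 0 ≤ dist μ ν := dist_nonneg
    have hmono : Monotone (hleb (gQ Q)) := hleb_mono (integrable_gQ hint) gQ_nonneg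
    have hh0 : ∀ t, 0 ≤ hleb (gQ Q) t := hleb_nonneg gQ_nonneg
    have hfac0 : (0:ℝ) < ((Nat.factorial n) : ℝ) := by exact_mod_cast Nat.factorial_pos n
    -- dominating function
    have hDint : IntegrableOn
        (fun t => gQ Q t * (dist μ ν * hleb (gQ Q) t ^ n / (Nat.factorial n))) (Set.Iic x) := by
      have hmeasg : AEStronglyMeasurable (fun t => dist μ ν * hleb (gQ Q) t ^ n / (Nat.factorial n))
          (MeasureTheory.volume.restrict (Set.Iic x)) :=
        ((measurable_const.mul (hmono.measurable.pow_const n)).div_const _).aestronglyMeasurable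
      have hbd : ∀ t, ‖dist μ ν * hleb (gQ Q) t ^ n / (Nat.factorial n)‖
          ≤ dist μ ν * (∫ s, gQ Q s) ^ n / (Nat.factorial n) := by
        intro t
        rw [Real.norm_eq_abs, _root_.abs_of_nonneg
          (div_nonneg (mul_nonneg hd0 (pow_nonneg (hh0 t) n)) hfac0.le)]
        have h1 : hleb (gQ Q) t ^ n ≤ (∫ s, gQ Q s) ^ n :=
          pow_le_pow_left₀ (hh0 t) (hleb_le (integrable_gQ hint) gQ_nonneg t) n
        rw [div_eq_mul_inv, div_eq_mul_inv]
        exact mul_le_mul_of_nonneg_right (mul_le_mul_of_nonneg_left h1 hd0)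
          (inv_nonneg.2 hfac0.le)
      have h := Integrable.bdd_mul (integrable_gQ hint).integrableOn hmeasg
        (ae_of_all _ hbd)
      exact h.congr (ae_of_all _ fun t => mul_comm _ _)
    have hnorm : ‖∫ t in Set.Iic x, (Gker Q lam (⇑a) x t - Gker Q lam (⇑b) x t)‖
        ≤ ∫ t in Set.Iic x, gQ Q t * (dist μ ν * hleb (gQ Q) t ^ n / (Nat.factorial n)) := by
      refine norm_integral_le_of_norm_le hDint (ae_of_all _ fun t => ?_)
      rw [hdiff t]
      refine (norm_Gker_le Q lam δ x t).trans ?_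
      exact mul_le_mul_of_nonneg_left (hδb t) (gQ_nonneg t)
    refine hnorm.trans ?_
    have hre : ∀ t, gQ Q t * (dist μ ν * hleb (gQ Q) t ^ n / (Nat.factorial n))
        = (dist μ ν / (Nat.factorial n)) * (gQ Q t * hleb (gQ Q) t ^ n) := fun t => by ring
    rw [show (fun t => gQ Q t * (dist μ ν * hleb (gQ Q) t ^ n / (Nat.factorial n)))
        = fun t => (dist μ ν / (Nat.factorial n)) * (gQ Q t * hleb (gQ Q) t ^ n) from funext hre]
    rw [integral_const_mul]
    have hkey := real_key (measurable_gQ hmeas) (integrable_gQ hint) gQ_nonneg n x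
    refine (mul_le_mul_of_nonneg_left hkey (div_nonneg hd0 hfac0.le)).trans (le_of_eq ?_)
    have hf : ((Nat.factorial (n+1)) : ℝ) = ((n:ℝ)+1) * (Nat.factorial n) := by
      rw [Nat.factorial_succ]; push_cast; ring
    rw [hf, div_mul_div_comm, mul_comm ((Nat.factorial n : ℝ)) ((n:ℝ)+1)]

lemma dist_iterate_le (hmeas : ∀ a b, Measurable fun x => Q x a b)
    (hint : ∀ a b, Integrable fun x => Q x a b) (n : ℕ)
    (μ ν : BoundedContinuousFunction ℝ V) :
    dist ((Top Q lam hmeas hint)^[n] μ) ((Top Q lam hmeas hint)^[n] ν)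
      ≤ ((∫ t, gQ Q t) ^ n / (Nat.factorial n)) * dist μ ν := by
  have hH0 : 0 ≤ ∫ t, gQ Q t := integral_nonneg gQ_nonneg
  have hfac0 : (0:ℝ) < ((Nat.factorial n) : ℝ) := by exact_mod_cast Nat.factorial_pos n
  refine (BoundedContinuousFunction.dist_le ?_).2 fun x => ?_
  · have := dist_nonneg (x := μ) (y := ν); positivity
  · rw [dist_eq_norm]
    refine (iterate_bound hmeas hint n μ ν x).trans ?_
    have h1 : hleb (gQ Q) x ≤ ∫ t, gQ Q t := hleb_le (integrable_gQ hint) gQ_nonneg x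
    have h2 : hleb (gQ Q) x ^ n ≤ (∫ t, gQ Q t) ^ n :=
      pow_le_pow_left₀ (hleb_nonneg gQ_nonneg x) h1 n
    calc dist μ ν * hleb (gQ Q) x ^ n / (Nat.factorial n) ≤ dist μ ν * (∫ t, gQ Q t) ^ n / (Nat.factorial n) := by
          rw [div_eq_mul_inv, div_eq_mul_inv]
          exact mul_le_mul_of_nonneg_right (mul_le_mul_of_nonneg_left h2 dist_nonneg)
            (inv_nonneg.2 hfac0.le)
      _ = ((∫ t, gQ Q t) ^ n / (Nat.factorial n)) * dist μ ν := by ring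

/-- Existence and uniqueness of the fixed point. -/
lemma existsUnique_fixedPoint (hmeas : ∀ a b, Measurable fun x => Q x a b)
    (hint : ∀ a b, Integrable fun x => Q x a b) :
    ∃! p : BoundedContinuousFunction ℝ V, Top Q lam hmeas hint p = p := by
  set H := ∫ t, gQ Q t with hH
  have hH0 : 0 ≤ H := integral_nonneg gQ_nonneg
  have htend : Filter.Tendsto (fun n : ℕ => H ^ n / (Nat.factorial n)) Filter.atTop (nhds 0) :=
    FloorSemiring.tendsto_pow_div_factorial_atTop H
  obtain ⟨n, hnlt⟩ := (htend.eventually_lt_const zero_lt_one).exists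
  have hnn : 0 ≤ H ^ n / (Nat.factorial n) := by positivity
  set K : NNReal := Real.toNNReal (H ^ n / (Nat.factorial n)) with hK
  have hKcoe : (K : ℝ) = H ^ n / (Nat.factorial n) := Real.coe_toNNReal _ hnn
  have hlip : LipschitzWith K ((Top Q lam hmeas hint)^[n]) := by
    refine LipschitzWith.of_dist_le_mul fun μ ν => ?_
    rw [hKcoe]
    exact dist_iterate_le hmeas hint n μ ν
  have hcontr : ContractingWith K ((Top Q lam hmeas hint)^[n]) := by
    refine ⟨?_, hlip⟩
    rw [← NNReal.coe_lt_coe, hKcoe, NNReal.coe_one]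
    exact hnlt
  set p := ContractingWith.fixedPoint _ hcontr with hp
  have hpfix : Function.IsFixedPt ((Top Q lam hmeas hint)^[n]) p :=
    ContractingWith.fixedPoint_isFixedPt hcontr
  have hTp : Top Q lam hmeas hint p = p := by
    have h1 : Function.IsFixedPt ((Top Q lam hmeas hint)^[n]) (Top Q lam hmeas hint p) := by
      unfold Function.IsFixedPt
      rw [← Function.iterate_succ_apply, Function.iterate_succ_apply', hpfix.eq]
    exact hcontr.fixedPoint_unique' h1 hpfix
  refine ⟨p, hTp, fun q hq => ?_⟩
  exact hcontr.fixedPoint_unique' (Function.IsFixedPt.iterate hq n) hpfix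


/-! ### Translation back to matrices -/

lemma integral_V_apply {m : MeasureTheory.Measure ℝ} {F : ℝ → V} (hF : Integrable F m)
    (a b : Idx) : (∫ t, F t ∂m) a b = ∫ t, F t a b ∂m := by
  have h1 : (∫ t, F t ∂m) a = ∫ t, F t a ∂m :=
    (ContinuousLinearMap.integral_comp_comm
      (ContinuousLinearMap.proj (R := ℂ) (φ := fun _ : Idx => Idx → ℂ) a) hF).symm
  have hFa : Integrable (fun t => F t a) m :=
    (ContinuousLinearMap.proj (R := ℂ) (φ := fun _ : Idx => Idx → ℂ) a).integrable_comp hF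
  have h2 : (∫ t, F t a ∂m) b = ∫ t, F t a b ∂m :=
    (ContinuousLinearMap.integral_comp_comm
      (ContinuousLinearMap.proj (R := ℂ) (φ := fun _ : Idx => ℂ) b) hFa).symm
  rw [h1, h2]

lemma Gker_entry (Q : ℝ → Matrix (Fin 2) (Fin 2) ℂ) (lam : ℝ)
    (μM : ℝ → Matrix Idx Idx ℂ) (x t : ℝ) (a b : Idx) :
    Gker Q lam (fun t i j => μM t i j) x t a b
      = (expSig (Complex.I * lam * ((t : ℂ) - (x : ℂ))) * Umat Q t * μM t
          * expSig (-(Complex.I * lam * ((t : ℂ) - (x : ℂ))))) a b := by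
  unfold Gker cc uMat
  rw [Matrix.mul_assoc, Matrix.mul_assoc]
  simp [vmul, eSig, Matrix.mul_apply]

end VolterraAux

/-- If `Q : ℝ → M₂(ℂ)` is measurable and integrable, then for each `λ ∈ ℝ` there is a
unique bounded continuous `μ : ℝ → M₄(ℂ)` solving the Volterra integral equation
`μ(x) = I₄ + ∫_{−∞}^{x} e^{iλ(x'−x)σ} U(x') μ(x') e^{−iλ(x'−x)σ} dx'`. -/
theorem volterra_existence_uniqueness (Q : ℝ → Matrix (Fin 2) (Fin 2) ℂ)
    (hmeas : ∀ a b, Measurable fun x => Q x a b)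
    (hint : ∀ a b, MeasureTheory.Integrable fun x => Q x a b)
    (lam : ℝ) :
    ∃! μ : ℝ → Matrix (Fin 2 ⊕ Fin 2) (Fin 2 ⊕ Fin 2) ℂ,
      (∀ a b, Continuous fun x => μ x a b) ∧
      (∃ C : ℝ, ∀ x a b, ‖μ x a b‖ ≤ C) ∧
      (∀ x a b, μ x a b = (1 : Matrix (Fin 2 ⊕ Fin 2) (Fin 2 ⊕ Fin 2) ℂ) a b +
        ∫ x' in Set.Iic x,
          (expSig (Complex.I * lam * ((x' : ℂ) - (x : ℂ))) * Umat Q x' * μ x' *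
            expSig (-(Complex.I * lam * ((x' : ℂ) - (x : ℂ))))) a b) := by
  classical
  open VolterraAux MeasureTheory in
  obtain ⟨p, hp, hpuniq⟩ := VolterraAux.existsUnique_fixedPoint (Q := Q) (lam := lam) hmeas hint
  have hpm : Measurable (⇑p) := p.continuous.measurable
  have hpbd : ∀ t, ‖p t‖ ≤ ‖p‖ := fun t => p.norm_coe_le_norm t
  have hIntp := fun x => VolterraAux.integrableOn_Gker (lam := lam) hmeas hint hpm hpbd x
  refine ⟨fun x => Matrix.of (p x), ⟨?_, ?_, ?_⟩, ?_⟩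
  · intro a b
    exact (continuous_apply b).comp ((continuous_apply a).comp p.continuous)
  · refine ⟨‖p‖, fun x a b => ?_⟩
    exact (VolterraAux.entry_le_norm (p x) a b).trans (p.norm_coe_le_norm x)
  · intro x a b
    have hfix : p x = VolterraAux.oneV
        + ∫ t in Set.Iic x, VolterraAux.Gker Q lam (⇑p) x t :=
      (congrFun (congrArg DFunLike.coe hp) x).symm
    calc (Matrix.of (p x) : Matrix _ _ ℂ) a b = p x a b := rfl
      _ = VolterraAux.oneV a b
          + (∫ t in Set.Iic x, VolterraAux.Gker Q lam (⇑p) x t) a b := by rw [hfix]; rfl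
      _ = (1 : Matrix (Fin 2 ⊕ Fin 2) (Fin 2 ⊕ Fin 2) ℂ) a b
          + ∫ t in Set.Iic x, VolterraAux.Gker Q lam (⇑p) x t a b := by
          rw [VolterraAux.integral_V_apply (hIntp x)]; rfl
      _ = _ := by
          congr 1
          refine MeasureTheory.integral_congr_ae (Filter.EventuallyEq.of_eq (funext fun t => ?_))
          exact VolterraAux.Gker_entry Q lam (fun t => Matrix.of (p t)) x t a b
  · rintro ν ⟨hcont, ⟨C, hC⟩, heqn⟩
    set ν' : ℝ → VolterraAux.V := fun x i j => ν x i j with hν'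
    have hν'cont : Continuous ν' := continuous_pi fun i => continuous_pi fun j => hcont i j
    have hC0 : 0 ≤ C := le_trans (norm_nonneg _) (hC 0 (Sum.inl 0) (Sum.inl 0))
    have hbd : ∀ x, ‖ν' x‖ ≤ C := fun x =>
      VolterraAux.norm_le_of_entries hC0 fun i j => hC x i j
    set νb := BoundedContinuousFunction.ofNormedAddCommGroup ν' hν'cont C hbd with hνb
    have hνbcoe : ⇑νb = ν' := rfl
    have hIntν := fun x => VolterraAux.integrableOn_Gker (lam := lam) hmeas hint
      (hν'cont.measurable) (fun t => (hbd t)) x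
    have hfixν : VolterraAux.Top Q lam hmeas hint νb = νb := by
      refine BoundedContinuousFunction.ext fun x => funext fun i => funext fun j => ?_
      calc (VolterraAux.Top Q lam hmeas hint νb) x i j
          = VolterraAux.oneV i j
            + (∫ t in Set.Iic x, VolterraAux.Gker Q lam ν' x t) i j := rfl
        _ = (1 : Matrix (Fin 2 ⊕ Fin 2) (Fin 2 ⊕ Fin 2) ℂ) i j
            + ∫ t in Set.Iic x, VolterraAux.Gker Q lam ν' x t i j := by
            rw [VolterraAux.integral_V_apply (hIntν x)]; rfl
        _ = (1 : Matrix (Fin 2 ⊕ Fin 2) (Fin 2 ⊕ Fin 2) ℂ) i j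
            + ∫ t in Set.Iic x,
              (expSig (Complex.I * lam * ((t : ℂ) - (x : ℂ))) * Umat Q t * ν t
                * expSig (-(Complex.I * lam * ((t : ℂ) - (x : ℂ))))) i j := by
            congr 1
            refine MeasureTheory.integral_congr_ae (Filter.EventuallyEq.of_eq (funext fun t => ?_))
            exact VolterraAux.Gker_entry Q lam (fun t => ν t) x t i j
        _ = ν x i j := (heqn x i j).symm
        _ = νb x i j := rfl
    have hνbp : νb = p := hpuniq νb hfixν
    funext x
    refine Matrix.ext fun i j => ?_
    have : νb x i j = p x i j := by rw [hνbp]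
    exact this
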